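/- Let D ⊆ ℂ be a domain, z₀ ∈ D, and f : D → ℂ analytic. If the natural extension f* is constant on the halo hal(z₀), then f is constant on all of D. -/

import Mathlib

open Filter

/-- The hypercomplex numbers: the ultrapower of `ℂ` along the hyperfilter on `ℕ`. -/
abbrev Hypercomplex : Type := Filter.Germ (Filter.hyperfilter ℕ : Filter ℕ) ℂ

namespace Hypercomplex

/-- Real part, a hyperreal. -/
noncomputable def re (z : Hypercomplex) : Hyperreal := z.map Complex.re

/-- Imaginary part, a hyperreal. -/
noncomputable def im (z : Hypercomplex) : Hyperreal := z.map Complex.im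

/-- Inclusion of the complex numbers. -/
noncomputable def ofC (w : ℂ) : Hypercomplex := (↑w : Hypercomplex)

/-- A hypercomplex number is limited if both parts are not infinite. -/
def Limited (z : Hypercomplex) : Prop := ¬ z.re.Infinite ∧ ¬ z.im.Infinite

/-- Infinitesimal closeness: both parts of the difference are infinitesimal. -/
def InfClose (z w : Hypercomplex) : Prop :=
  ((z - w).re).Infinitesimal ∧ ((z - w).im).Infinitesimal

/-- The shadow (standard part) of a hypercomplex number. -/
noncomputable def sh (z : Hypercomplex) : ℂ := ⟨z.re.st, z.im.st⟩

end Hypercomplex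

/-- The natural extension of `f : ℂ → ℂ` to the hypercomplex numbers. -/
noncomputable def starFunCC (f : ℂ → ℂ) : Hypercomplex → Hypercomplex :=
  fun z => Filter.Germ.map f z

open Hypercomplex in
/-- an analytic function on a domain whose natural extension is
constant on the halo of some point of the domain is constant on the whole
domain. -/
theorem analytic_constant_of_constant_on_halo (D : Set ℂ) (hD : IsOpen D)
    (hconn : IsPreconnected D) (z₀ : ℂ) (hz₀ : z₀ ∈ D)
    (f : ℂ → ℂ) (hf : AnalyticOnNhd ℂ f D)
    (h : ∀ z w : Hypercomplex, InfClose z (ofC z₀) → InfClose w (ofC z₀) →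
      starFunCC f z = starFunCC f w) :
    ∀ z ∈ D, f z = f z₀ := by
  -- Step 1: f is eventually equal to f z₀ near z₀.
  have hev : ∀ᶠ z in nhds z₀, f z = f z₀ := by
    by_contra hne
    have hfreq : ∃ᶠ z in nhds z₀, f z ≠ f z₀ := Filter.not_eventually.mp hne
    obtain ⟨x, hx, hxne⟩ := Filter.exists_seq_forall_of_frequently hfreq
    -- the hypercomplex number given by the sequence x
    set Z : Hypercomplex := (↑x : Hypercomplex) with hZ
    have hsub : Z - ofC z₀ = (↑(fun n => x n - z₀) : Hypercomplex) := rfl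
    have hclose : InfClose Z (ofC z₀) := by
      constructor
      · have : Filter.Tendsto (fun n => (x n - z₀).re) Filter.atTop (nhds 0) := by
          have := (hx.sub_const z₀)
          simpa [Function.comp_def] using (Complex.continuous_re.continuousAt.tendsto.comp this)
        simpa [Hypercomplex.re, hsub, Filter.Germ.map_coe, Function.comp_def, Hyperreal.ofSeq] using
          Hyperreal.infinitesimal_of_tendsto_zero this
      · have : Filter.Tendsto (fun n => (x n - z₀).im) Filter.atTop (nhds 0) := by
          have := (hx.sub_const z₀)
          simpa [Function.comp_def] using (Complex.continuous_im.continuousAt.tendsto.comp this)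
        simpa [Hypercomplex.im, hsub, Filter.Germ.map_coe, Function.comp_def, Hyperreal.ofSeq] using
          Hyperreal.infinitesimal_of_tendsto_zero this
    have hclose0 : InfClose (ofC z₀) (ofC z₀) := by
      constructor <;>
      · simpa [Hypercomplex.re, Hypercomplex.im, ofC,
          show Germ.map Complex.re (0 : Hypercomplex) = (0 : Hyperreal) from rfl,
          show Germ.map Complex.im (0 : Hypercomplex) = (0 : Hyperreal) from rfl] using Hyperreal.infinitesimal_zero
    have heq := h Z (ofC z₀) hclose hclose0
    rw [hZ] at heq
    have heq2 : (↑(f ∘ x) : Hypercomplex) = (↑(fun _ : ℕ => f z₀) : Hypercomplex) := by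
      exact heq
    rw [Filter.Germ.coe_eq] at heq2
    obtain ⟨n, hn⟩ := heq2.exists
    exact hxne n hn
  -- Step 2: identity theorem.
  have hg : AnalyticOnNhd ℂ (fun _ : ℂ => f z₀) D := fun z _ => analyticAt_const
  exact fun z hz =>
    hf.eqOn_of_preconnected_of_eventuallyEq hg hconn hz₀ hev hz
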